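/- arXiv:2508.14141 — 3 statements merged into one kernel-verified Lean document; each statement's English description precedes it below -/
import Mathlib

section
/- The Fano plane is not realizable over the complex numbers: there is no family of vectors γ : Fin 7 → ℂ³ such that for every subset S of Fin 7, the family (γ i)_{i ∈ S} is linearly dependent if and only if S is a dependent set of the Fano matroid. -/
/-- The seven lines of the Fano plane on ground set `Fin 7`
(points `1,...,7` identified with `0,...,6`). -/
def fanoLines : Finset (Finset (Fin 7)) :=
  {{0, 1, 4}, {2, 3, 4}, {1, 2, 5}, {0, 3, 5}, {0, 2, 6}, {1, 3, 6}, {4, 5, 6}}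

/-- A subset of `Fin 7` is dependent in the Fano matroid iff it has at least
four elements or contains one of the seven lines. -/
def fanoDep (S : Finset (Fin 7)) : Prop :=
  4 ≤ S.card ∨ ∃ L ∈ fanoLines, L ⊆ S

lemma li_iff_det (γ : Fin 7 → Fin 3 → ℂ) {i j k : Fin 7}
    (hij : i ≠ j) (hik : i ≠ k) (hjk : j ≠ k) :
    LinearIndependent ℂ (fun x : ({i, j, k} : Finset (Fin 7)) => γ x.1) ↔
      (Matrix.of ![γ i, γ j, γ k]).det ≠ 0 := by
  have hi : i ∈ ({i, j, k} : Finset (Fin 7)) := by simp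
  have hj : j ∈ ({i, j, k} : Finset (Fin 7)) := by simp
  have hk : k ∈ ({i, j, k} : Finset (Fin 7)) := by simp
  set e : Fin 3 → ({i, j, k} : Finset (Fin 7)) := ![⟨i, hi⟩, ⟨j, hj⟩, ⟨k, hk⟩] with he
  have hbij : Function.Bijective e := by
    constructor
    · intro p q hpq
      fin_cases p <;> fin_cases q <;> simp_all [he] <;> simp_all [Subtype.ext_iff] <;>
        first | rfl | exact absurd hpq (by assumption) | exact absurd hpq.symm (by assumption)
    · rintro ⟨x, hx⟩
      simp [Finset.mem_insert] at hx
      rcases hx with h | h | h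
      · exact ⟨0, by simp [he, h]⟩
      · exact ⟨1, by simp [he, h]⟩
      · exact ⟨2, by simp [he, h]⟩
  rw [← linearIndependent_equiv (Equiv.ofBijective e hbij)]
  have hcomp : ((fun x : ({i, j, k} : Finset (Fin 7)) => γ x.1) ∘ (Equiv.ofBijective e hbij))
      = fun p => (Matrix.of ![γ i, γ j, γ k]) p := by
    funext p; fin_cases p <;> simp [he, Equiv.ofBijective, Matrix.of_apply] <;> rfl
  rw [hcomp]
  show LinearIndependent ℂ (Matrix.row (Matrix.of ![γ i, γ j, γ k])) ↔ _
  rw [Matrix.linearIndependent_rows_iff_isUnit, Matrix.isUnit_iff_isUnit_det,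
    isUnit_iff_ne_zero]


/-- The Fano plane is not realizable over the complex numbers: there is no family of
vectors `γ : Fin 7 → ℂ³` such that a subset `S` is linearly dependent under `γ`
exactly when it is dependent in the Fano matroid. -/
theorem fano_not_realizable :
    ¬ ∃ γ : Fin 7 → (Fin 3 → ℂ), ∀ S : Finset (Fin 7),
        (¬ LinearIndependent ℂ (fun i : S => γ i.1)) ↔ fanoDep S := by
  rintro ⟨γ, h⟩
  have key : ∀ i j k : Fin 7, i ≠ j → i ≠ k → j ≠ k →
      ((Matrix.of ![γ i, γ j, γ k]).det = 0 ↔ fanoDep {i, j, k}) := by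
    intro i j k hij hik hjk
    have := h ({i, j, k} : Finset (Fin 7))
    rw [li_iff_det γ hij hik hjk, not_not] at this
    exact this
  -- the matrix of the first three vectors is invertible
  set A : Matrix (Fin 3) (Fin 3) ℂ := Matrix.of ![γ 0, γ 1, γ 2] with hA
  have hAdet : A.det ≠ 0 := fun h0 =>
    (by unfold fanoDep; decide : ¬ fanoDep {0, 1, 2})
      ((key 0 1 2 (by decide) (by decide) (by decide)).1 h0)
  have hone : A * A⁻¹ = 1 := Matrix.mul_nonsing_inv A (isUnit_iff_ne_zero.2 hAdet)
  have hinv : A⁻¹.det ≠ 0 := by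
    intro h0
    have h1 : A.det * A⁻¹.det = 1 := by rw [← Matrix.det_mul, hone, Matrix.det_one]
    rw [h0, mul_zero] at h1
    exact zero_ne_one h1
  -- normalized vectors
  set δ : Fin 7 → Fin 3 → ℂ := fun i => Matrix.vecMul (γ i) A⁻¹ with hδ
  have hmul : ∀ i j k : Fin 7,
      Matrix.of ![δ i, δ j, δ k] = Matrix.of ![γ i, γ j, γ k] * A⁻¹ := by
    intro i j k
    ext p q
    fin_cases p <;> simp [hδ, Matrix.mul_apply, Matrix.vecMul, dotProduct]
  have hdet : ∀ i j k : Fin 7,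
      (Matrix.of ![δ i, δ j, δ k]).det = (Matrix.of ![γ i, γ j, γ k]).det * A⁻¹.det := by
    intro i j k; rw [hmul, Matrix.det_mul]
  have hzero : ∀ i j k : Fin 7, i ≠ j → i ≠ k → j ≠ k → fanoDep {i, j, k} →
      (Matrix.of ![δ i, δ j, δ k]).det = 0 := by
    intro i j k hij hik hjk hd
    rw [hdet, (key i j k hij hik hjk).2 hd, zero_mul]
  have hne : ∀ i j k : Fin 7, i ≠ j → i ≠ k → j ≠ k → ¬ fanoDep {i, j, k} →
      (Matrix.of ![δ i, δ j, δ k]).det ≠ 0 := by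
    intro i j k hij hik hjk hd
    rw [hdet]
    exact mul_ne_zero (fun h0 => hd ((key i j k hij hik hjk).1 h0)) hinv
  -- the first three normalized vectors form the identity matrix
  have hid : Matrix.of ![δ 0, δ 1, δ 2] = (1 : Matrix (Fin 3) (Fin 3) ℂ) := by
    rw [hmul 0 1 2, ← hA, hone]
  have d00 : δ 0 0 = 1 := by have := congrFun (congrFun hid 0) 0; simpa using this
  have d01 : δ 0 1 = 0 := by have := congrFun (congrFun hid 0) 1; simpa using this
  have d02 : δ 0 2 = 0 := by have := congrFun (congrFun hid 0) 2; simpa using this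
  have d10 : δ 1 0 = 0 := by have := congrFun (congrFun hid 1) 0; simpa using this
  have d11 : δ 1 1 = 1 := by have := congrFun (congrFun hid 1) 1; simpa using this
  have d12 : δ 1 2 = 0 := by have := congrFun (congrFun hid 1) 2; simpa using this
  have d20 : δ 2 0 = 0 := by have := congrFun (congrFun hid 2) 0; simpa using this
  have d21 : δ 2 1 = 0 := by have := congrFun (congrFun hid 2) 1; simpa using this
  have d22 : δ 2 2 = 1 := by have := congrFun (congrFun hid 2) 2; simpa using this
  -- zero determinants from the lines
  have L014 := hzero 0 1 4 (by decide) (by decide) (by decide) (by unfold fanoDep; decide)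
  have L234 := hzero 2 3 4 (by decide) (by decide) (by decide) (by unfold fanoDep; decide)
  have L125 := hzero 1 2 5 (by decide) (by decide) (by decide) (by unfold fanoDep; decide)
  have L035 := hzero 0 3 5 (by decide) (by decide) (by decide) (by unfold fanoDep; decide)
  have L026 := hzero 0 2 6 (by decide) (by decide) (by decide) (by unfold fanoDep; decide)
  have L136 := hzero 1 3 6 (by decide) (by decide) (by decide) (by unfold fanoDep; decide)
  have L456 := hzero 4 5 6 (by decide) (by decide) (by decide) (by unfold fanoDep; decide)
  -- nonzero determinants
  have N013 := hne 0 1 3 (by decide) (by decide) (by decide) (by unfold fanoDep; decide)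
  have N023 := hne 0 2 3 (by decide) (by decide) (by decide) (by unfold fanoDep; decide)
  have N123 := hne 1 2 3 (by decide) (by decide) (by decide) (by unfold fanoDep; decide)
  have N024 := hne 0 2 4 (by decide) (by decide) (by decide) (by unfold fanoDep; decide)
  have N015 := hne 0 1 5 (by decide) (by decide) (by decide) (by unfold fanoDep; decide)
  have N126 := hne 1 2 6 (by decide) (by decide) (by decide) (by unfold fanoDep; decide)
  -- extract scalar information
  simp only [Matrix.det_fin_three, Matrix.of_apply, Matrix.cons_val', Matrix.cons_val_zero,
    Matrix.cons_val_one, Matrix.head_cons, Matrix.head_fin_const, Matrix.empty_val',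
    Matrix.cons_val_fin_one, Matrix.cons_val_two, Matrix.tail_cons,
    d00, d01, d02, d10, d11, d12, d20, d21, d22, one_mul, mul_one, zero_mul, mul_zero,
    sub_zero, zero_sub, add_zero, zero_add, neg_zero, neg_neg, mul_neg, neg_eq_zero,
    sub_self] at L014 L234 L125 L035 L026 L136 L456 N013 N023 N123 N024 N015 N126
  -- L014 : δ 4 2 = 0, L125 : δ 5 0 = 0, L026 : δ 6 1 = 0 (up to sign)
  have hz4 : δ 4 2 = 0 := by linear_combination L014
  have hx5 : δ 5 0 = 0 := by linear_combination L125
  have hy6 : δ 6 1 = 0 := by linear_combination L026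
  have ha : δ 3 0 ≠ 0 := N123
  have hb : δ 3 1 ≠ 0 := fun h0 => N023 (by rw [h0, neg_zero])
  have hc : δ 3 2 ≠ 0 := N013
  have hy : δ 4 1 ≠ 0 := fun h0 => N024 (by rw [h0, neg_zero])
  have hz5 : δ 5 2 ≠ 0 := N015
  have hx6 : δ 6 0 ≠ 0 := N126
  -- canonical forms of the remaining equations
  have E1 : δ 3 0 * δ 4 1 - δ 3 1 * δ 4 0 = 0 := by linear_combination L234
  have E2 : δ 3 1 * δ 5 2 - δ 3 2 * δ 5 1 = 0 := by linear_combination L035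
  have E3 : δ 3 2 * δ 6 0 - δ 3 0 * δ 6 2 = 0 := by linear_combination L136
  have E4 : δ 4 0 * δ 5 1 * δ 6 2 + δ 4 1 * δ 5 2 * δ 6 0 = 0 := by
    rw [hz4, hx5, hy6] at L456
    linear_combination L456
  have final : (2 : ℂ) * (δ 3 0 * δ 3 1 * δ 3 2 * δ 4 1 * δ 5 2 * δ 6 0) = 0 := by
    linear_combination (δ 3 0 * δ 3 1 * δ 3 2) * E4
      + (δ 3 1 * δ 3 2 * δ 5 2 * δ 6 0) * E1
      + (δ 3 0 * δ 3 1 * δ 4 0 * δ 6 2) * E2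
      + (δ 3 1 * δ 3 1 * δ 4 0 * δ 5 2) * E3
  have : δ 3 0 * δ 3 1 * δ 3 2 * δ 4 1 * δ 5 2 * δ 6 0 ≠ 0 := by
    apply mul_ne_zero; apply mul_ne_zero; apply mul_ne_zero; apply mul_ne_zero
    all_goals first | exact mul_ne_zero ha hb | assumption
  rw [mul_eq_zero] at final
  rcases final with h2 | h0
  · exact two_ne_zero h2
  · exact this h0
end

section
/- Let M be a point-line configuration in which every line belongs to at most one cycle. Then any two distinct cycles of M (as submatroids) share at most one point of the ground set. -/
/-- A point-line configuration: a finite set of points together with a set of lines,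
each line being a subset of the points with at least three elements, and any two
distinct lines meeting in at most one point (the combinatorial data of a simple
matroid of rank at most 3). -/
structure PLC (α : Type*) [DecidableEq α] where
  E : Finset α
  lines : Finset (Finset α)
  subset_ground : ∀ l ∈ lines, l ⊆ E
  three_le : ∀ l ∈ lines, 3 ≤ l.card
  inter_le_one : ∀ l ∈ lines, ∀ l' ∈ lines, l ≠ l' → (l ∩ l').card ≤ 1

/-- The set of lines `Ls` forms a cycle of `M`: the lines of `Ls` can be ordered
`l₁, ..., lₙ` with points `p₁, ..., pₙ` such that `pᵢ` lies exactly on `lᵢ` and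
`l_{i+1}` (indices mod `n`), and every other point of the cycle lies on exactly one
of its lines. -/
def IsCycle {α : Type*} [DecidableEq α] (M : PLC α) (Ls : Finset (Finset α)) : Prop :=
  Ls ⊆ M.lines ∧
  ∃ (n : ℕ) (l : Fin (n + 2) → Finset α) (p : Fin (n + 2) → α),
    Function.Injective l ∧ (∀ L, L ∈ Ls ↔ ∃ i, l i = L) ∧
    Function.Injective p ∧
    (∀ i j, p i ∈ l j ↔ j = i ∨ j = i + 1) ∧
    (∀ x ∈ Ls.sup id, x ∉ Set.range p → ∃! j, x ∈ l j)

namespace CyclesProof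

variable {α : Type*} [DecidableEq α]

/-- A "pre-cycle" witness: a cyclically arranged list of `k` distinct lines, each
drawn from `K ∪ H`, with a point joining each consecutive pair, having exactly two
"crossing" positions (where the sequence passes between `K` and `H`), and the two
crossing points are distinct. -/
structure Pre (K H : Finset (Finset α)) (k : ℕ) where
  l : ℕ → Finset α
  q : ℕ → α
  hk : 2 ≤ k
  lper : ∀ m, l (m + k) = l m
  qper : ∀ m, q (m + k) = q m
  linj : ∀ m, m < k → ∀ m', m' < k → l m = l m' → m = m'
  lmem : ∀ m, l m ∈ K ∪ H
  qmem₁ : ∀ m, q m ∈ l m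
  qmem₂ : ∀ m, q m ∈ l (m + 1)
  i₀ : ℕ
  j₀ : ℕ
  hi₀ : i₀ < k
  hj₀ : j₀ < k
  hij : i₀ ≠ j₀
  ci : ¬(l i₀ ∈ K ↔ l (i₀ + 1) ∈ K)
  cj : ¬(l j₀ ∈ K ↔ l (j₀ + 1) ∈ K)
  qij : q i₀ ≠ q j₀
  ccomp : ∀ m, m < k → ¬(l m ∈ K ↔ l (m + 1) ∈ K) → m = i₀ ∨ m = j₀

namespace Pre

variable {K H : Finset (Finset α)} {k : ℕ}

lemma kpos (P : Pre K H k) : 0 < k := by have := P.hk; omega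

lemma lmul (P : Pre K H k) (t m : ℕ) : P.l (m + t * k) = P.l m := by
  induction t with
  | zero => simp
  | succ t ih =>
      have : m + (t + 1) * k = (m + t * k) + k := by ring
      rw [this, P.lper, ih]

lemma lmod (P : Pre K H k) (m : ℕ) : P.l (m % k) = P.l m := by
  conv_rhs => rw [← Nat.mod_add_div' m k]
  rw [P.lmul]

lemma lcong (P : Pre K H k) {m m' : ℕ} (h : m % k = m' % k) : P.l m = P.l m' := by
  rw [← P.lmod m, h, P.lmod]

lemma qmul (P : Pre K H k) (t m : ℕ) : P.q (m + t * k) = P.q m := by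
  induction t with
  | zero => simp
  | succ t ih =>
      have : m + (t + 1) * k = (m + t * k) + k := by ring
      rw [this, P.qper, ih]

lemma qmod (P : Pre K H k) (m : ℕ) : P.q (m % k) = P.q m := by
  conv_rhs => rw [← Nat.mod_add_div' m k]
  rw [P.qmul]

lemma qcong (P : Pre K H k) {m m' : ℕ} (h : m % k = m' % k) : P.q m = P.q m' := by
  rw [← P.qmod m, h, P.qmod]

/-- If no crossing occurs in `[u, v)`, the side is constant from `u` to `v`. -/
lemma const (P : Pre K H k) {u v : ℕ} (huv : u ≤ v)
    (h : ∀ m, u ≤ m → m < v → (P.l m ∈ K ↔ P.l (m + 1) ∈ K)) :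
    (P.l u ∈ K ↔ P.l v ∈ K) := by
  induction v, huv using Nat.le_induction with
  | base => exact Iff.rfl
  | succ v hv ih =>
      exact (ih (fun m hm hm' => h m hm (by omega))).trans (h v hv (by omega))

end Pre

/-- Smart constructor: build a `Pre` from data on `[0, k)`. -/
def mkPre (K H : Finset (Finset α)) (k : ℕ) (lb : ℕ → Finset α) (qb : ℕ → α)
    (hk : 2 ≤ k)
    (hinj : ∀ m, m < k → ∀ m', m' < k → lb m = lb m' → m = m')
    (hmem : ∀ m, m < k → lb m ∈ K ∪ H)
    (hq1 : ∀ m, m < k → qb m ∈ lb m)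
    (hq2 : ∀ m, m < k → qb m ∈ lb ((m + 1) % k))
    (i₀ j₀ : ℕ) (hi : i₀ < k) (hj : j₀ < k) (hij : i₀ ≠ j₀)
    (ci : ¬(lb i₀ ∈ K ↔ lb ((i₀ + 1) % k) ∈ K))
    (cj : ¬(lb j₀ ∈ K ↔ lb ((j₀ + 1) % k) ∈ K))
    (hqij : qb i₀ ≠ qb j₀)
    (hcomp : ∀ m, m < k → ¬(lb m ∈ K ↔ lb ((m + 1) % k) ∈ K) → m = i₀ ∨ m = j₀) :
    Pre K H k where
  l m := lb (m % k)
  q m := qb (m % k)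
  hk := hk
  lper m := by show lb ((m + k) % k) = lb (m % k); rw [Nat.add_mod_right]
  qper m := by show qb ((m + k) % k) = qb (m % k); rw [Nat.add_mod_right]
  linj m hm m' hm' e :=
    hinj m hm m' hm' (by simpa [Nat.mod_eq_of_lt hm, Nat.mod_eq_of_lt hm'] using e)
  lmem m := hmem _ (Nat.mod_lt _ (by omega))
  qmem₁ m := hq1 _ (Nat.mod_lt _ (by omega))
  qmem₂ m := by
    show qb (m % k) ∈ lb ((m + 1) % k)
    have h := hq2 (m % k) (Nat.mod_lt _ (by omega))
    rwa [Nat.mod_add_mod] at h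
  i₀ := i₀
  j₀ := j₀
  hi₀ := hi
  hj₀ := hj
  hij := hij
  ci := by
    show ¬(lb (i₀ % k) ∈ K ↔ lb ((i₀ + 1) % k) ∈ K)
    rwa [Nat.mod_eq_of_lt hi]
  cj := by
    show ¬(lb (j₀ % k) ∈ K ↔ lb ((j₀ + 1) % k) ∈ K)
    rwa [Nat.mod_eq_of_lt hj]
  qij := by
    show qb (i₀ % k) ≠ qb (j₀ % k)
    rwa [Nat.mod_eq_of_lt hi, Nat.mod_eq_of_lt hj]
  ccomp m hm c := by
    replace c : ¬(lb (m % k) ∈ K ↔ lb ((m + 1) % k) ∈ K) := c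
    rw [Nat.mod_eq_of_lt hm] at c
    exact hcomp m hm c


/-- Swap the two designated crossings. -/
def Pre.swap {K H : Finset (Finset α)} {k : ℕ} (P : Pre K H k) : Pre K H k :=
  { P with
    i₀ := P.j₀, j₀ := P.i₀, hi₀ := P.hj₀, hj₀ := P.hi₀, hij := P.hij.symm,
    ci := P.cj, cj := P.ci, qij := P.qij.symm,
    ccomp := fun m hm c => (P.ccomp m hm c).symm }

/-- Rotate a pre-cycle by `i`. -/
def Pre.rotate {K H : Finset (Finset α)} {k : ℕ} (P : Pre K H k) (i : ℕ) (hi : i ≤ k) :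
    Pre K H k := by
  have kpos : 0 < k := P.kpos
  have unshift : ∀ m, m < k → ((m + (k - i)) % k + i) % k = m := by
    intro m hm
    rw [Nat.mod_add_mod]
    have e : m + (k - i) + i = m + k := by omega
    rw [e, Nat.add_mod_right, Nat.mod_eq_of_lt hm]
  have unshift2 : ∀ m, m < k → ((m + i) % k + (k - i)) % k = m := by
    intro m hm
    rw [Nat.mod_add_mod]
    have e : m + i + (k - i) = m + k := by omega
    rw [e, Nat.add_mod_right, Nat.mod_eq_of_lt hm]
  have lsh : ∀ m, P.l ((m + 1) % k + i) = P.l (m + i + 1) := by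
    intro m
    refine P.lcong ?_
    rw [Nat.mod_add_mod]
    have e : m + 1 + i = m + i + 1 := by omega
    rw [e]
  refine mkPre K H k (fun m => P.l (m + i)) (fun m => P.q (m + i)) P.hk ?_ ?_ ?_ ?_
    ((P.i₀ + (k - i)) % k) ((P.j₀ + (k - i)) % k)
    (Nat.mod_lt _ kpos) (Nat.mod_lt _ kpos) ?_ ?_ ?_ ?_ ?_
  · intro m hm m' hm' e
    have e2 : P.l ((m + i) % k) = P.l ((m' + i) % k) := by
      rw [P.lmod, P.lmod]; exact e
    have := P.linj _ (Nat.mod_lt _ kpos) _ (Nat.mod_lt _ kpos) e2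
    have := congrArg (fun t => (t + (k - i)) % k) this
    simpa [unshift2 m hm, unshift2 m' hm'] using this
  · intro m _; exact P.lmem _
  · intro m _; exact P.qmem₁ _
  · intro m _
    have := P.qmem₂ (m + i)
    rwa [← lsh] at this
  · intro e
    have := congrArg (fun t => (t + i) % k) e
    simp only [unshift P.i₀ P.hi₀, unshift P.j₀ P.hj₀] at this
    exact P.hij this
  · show ¬(P.l ((P.i₀ + (k - i)) % k + i) ∈ K ↔
        P.l (((P.i₀ + (k - i)) % k + 1) % k + i) ∈ K)
    rw [lsh]
    have e1 : P.l ((P.i₀ + (k - i)) % k + i) = P.l P.i₀ := by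
      refine P.lcong ?_
      rw [unshift P.i₀ P.hi₀, Nat.mod_eq_of_lt P.hi₀]
    have e2 : P.l ((P.i₀ + (k - i)) % k + i + 1) = P.l (P.i₀ + 1) := by
      refine P.lcong ?_
      have : ((P.i₀ + (k - i)) % k + i + 1) % k = (((P.i₀ + (k - i)) % k + i) % k + 1) % k := by
        rw [Nat.mod_add_mod]
      rw [this, unshift P.i₀ P.hi₀]
    rw [e1, e2]
    exact P.ci
  · show ¬(P.l ((P.j₀ + (k - i)) % k + i) ∈ K ↔
        P.l (((P.j₀ + (k - i)) % k + 1) % k + i) ∈ K)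
    rw [lsh]
    have e1 : P.l ((P.j₀ + (k - i)) % k + i) = P.l P.j₀ := by
      refine P.lcong ?_
      rw [unshift P.j₀ P.hj₀, Nat.mod_eq_of_lt P.hj₀]
    have e2 : P.l ((P.j₀ + (k - i)) % k + i + 1) = P.l (P.j₀ + 1) := by
      refine P.lcong ?_
      have : ((P.j₀ + (k - i)) % k + i + 1) % k = (((P.j₀ + (k - i)) % k + i) % k + 1) % k := by
        rw [Nat.mod_add_mod]
      rw [this, unshift P.j₀ P.hj₀]
    rw [e1, e2]
    exact P.cj
  · show P.q ((P.i₀ + (k - i)) % k + i) ≠ P.q ((P.j₀ + (k - i)) % k + i)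
    have e1 : P.q ((P.i₀ + (k - i)) % k + i) = P.q P.i₀ := by
      refine P.qcong ?_
      rw [unshift P.i₀ P.hi₀, Nat.mod_eq_of_lt P.hi₀]
    have e2 : P.q ((P.j₀ + (k - i)) % k + i) = P.q P.j₀ := by
      refine P.qcong ?_
      rw [unshift P.j₀ P.hj₀, Nat.mod_eq_of_lt P.hj₀]
    rw [e1, e2]
    exact P.qij
  · intro m hm c
    replace c : ¬(P.l (m + i) ∈ K ↔ P.l ((m + 1) % k + i) ∈ K) := c
    rw [lsh] at c
    have c' : ¬(P.l ((m + i) % k) ∈ K ↔ P.l ((m + i) % k + 1) ∈ K) := by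
      have e1 : P.l ((m + i) % k) = P.l (m + i) := P.lmod _
      have e2 : P.l ((m + i) % k + 1) = P.l (m + i + 1) := by
        refine P.lcong ?_
        rw [Nat.mod_add_mod]
      rw [e1, e2]
      exact c
    rcases P.ccomp _ (Nat.mod_lt _ kpos) c' with e | e
    · left
      have := congrArg (fun t => (t + (k - i)) % k) e
      simpa [unshift2 m hm] using this
    · right
      have := congrArg (fun t => (t + (k - i)) % k) e
      simpa [unshift2 m hm] using this


section Core

variable {K H : Finset (Finset α)} {k : ℕ}

lemma lk_eq_l0 (P : Pre K H k) : P.l k = P.l 0 := by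
  have := P.lper 0
  simpa using this

/-- Shortening, case: both crossings in the first arc. -/
lemma core1 (P : Pre K H k) (d : ℕ) (hd2 : 2 ≤ d) (hdk : d + 2 ≤ k) (z : α)
    (hz0 : z ∈ P.l 0) (hzd : z ∈ P.l d)
    (hi : P.i₀ < d) (hj : P.j₀ < d) : Nonempty (Pre K H (d + 1)) := by
  have wrapiff : P.l d ∈ K ↔ P.l 0 ∈ K := by
    have h1 : P.l d ∈ K ↔ P.l k ∈ K := by
      refine P.const (by omega) ?_
      intro m hm hm'
      by_contra c
      rcases P.ccomp m (by omega) c with e | e <;> omega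
    rw [lk_eq_l0 P] at h1
    exact h1
  refine ⟨mkPre K H (d + 1) P.l (fun m => if m = d then z else P.q m) (by omega)
    ?_ ?_ ?_ ?_ P.i₀ P.j₀ (by omega) (by omega) P.hij ?_ ?_ ?_ ?_⟩
  · intro m hm m' hm' e
    exact P.linj m (by omega) m' (by omega) e
  · intro m _; exact P.lmem m
  · intro m hm
    by_cases hmd : m = d
    · subst hmd; simpa using hzd
    · simpa [hmd] using P.qmem₁ m
  · intro m hm
    by_cases hmd : m = d
    · subst hmd; simpa [Nat.mod_self] using hz0
    · have : (m + 1) % (d + 1) = m + 1 := Nat.mod_eq_of_lt (by omega)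
      simpa [hmd, this] using P.qmem₂ m
  · have : (P.i₀ + 1) % (d + 1) = P.i₀ + 1 := Nat.mod_eq_of_lt (by omega)
    rw [this]; exact P.ci
  · have : (P.j₀ + 1) % (d + 1) = P.j₀ + 1 := Nat.mod_eq_of_lt (by omega)
    rw [this]; exact P.cj
  · have h1 : P.i₀ ≠ d := by omega
    have h2 : P.j₀ ≠ d := by omega
    simpa [h1, h2] using P.qij
  · intro m hm c
    by_cases hmd : m = d
    · subst hmd
      rw [Nat.mod_self] at c
      exact absurd wrapiff c
    · have : (m + 1) % (d + 1) = m + 1 := Nat.mod_eq_of_lt (by omega)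
      rw [this] at c
      exact P.ccomp m (by omega) c

/-- Shortening, case: both crossings in the second arc. -/
lemma core2 (P : Pre K H k) (d : ℕ) (hd2 : 2 ≤ d) (hdk : d + 2 ≤ k) (z : α)
    (hz0 : z ∈ P.l 0) (hzd : z ∈ P.l d)
    (hi : d ≤ P.i₀) (hj : d ≤ P.j₀) : Nonempty (Pre K H (k - d + 1)) := by
  have hI := P.hi₀
  have hJ := P.hj₀
  have hIJ := P.hij
  have wrapiff : P.l 0 ∈ K ↔ P.l d ∈ K := by
    refine P.const (by omega) ?_
    intro m hm hm'
    by_contra c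
    rcases P.ccomp m (by omega) c with e | e <;> omega
  have hlk : P.l k = P.l 0 := lk_eq_l0 P
  have hdk' : d + (k - d) = k := by omega
  refine ⟨mkPre K H (k - d + 1) (fun m => P.l (d + m))
    (fun m => if m = k - d then z else P.q (d + m)) (by omega)
    ?_ ?_ ?_ ?_ (P.i₀ - d) (P.j₀ - d) (by omega) (by omega) (by omega) ?_ ?_ ?_ ?_⟩
  · intro m hm m' hm' e
    have e2 : P.l ((d + m) % k) = P.l ((d + m') % k) := by
      rw [P.lmod, P.lmod]; exact e
    have := P.linj _ (Nat.mod_lt _ (by omega)) _ (Nat.mod_lt _ (by omega)) e2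
    have e3 : (d + m) % k = if d + m = k then 0 else d + m := by
      split
      · simp [*]
      · exact Nat.mod_eq_of_lt (by omega)
    have e4 : (d + m') % k = if d + m' = k then 0 else d + m' := by
      split
      · simp [*]
      · exact Nat.mod_eq_of_lt (by omega)
    rw [e3, e4] at this
    split at this <;> split at this <;> omega
  · intro m _; exact P.lmem _
  · intro m hm
    by_cases hmd : m = k - d
    · subst hmd
      simp only [if_pos rfl, hdk', hlk]
      exact hz0
    · simp only [if_neg hmd]
      exact P.qmem₁ (d + m)
  · intro m hm
    by_cases hmd : m = k - d
    · subst hmd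
      simp only [if_pos rfl, Nat.mod_self, Nat.add_zero]
      exact hzd
    · have h1 : (m + 1) % (k - d + 1) = m + 1 := Nat.mod_eq_of_lt (by omega)
      simp only [if_neg hmd, h1, ← Nat.add_assoc]
      exact P.qmem₂ (d + m)
  · have h1 : (P.i₀ - d + 1) % (k - d + 1) = P.i₀ - d + 1 := Nat.mod_eq_of_lt (by omega)
    have h2 : d + (P.i₀ - d) = P.i₀ := by omega
    have h3 : d + (P.i₀ - d + 1) = P.i₀ + 1 := by omega
    simp only [h1, h2, h3]
    exact P.ci
  · have h1 : (P.j₀ - d + 1) % (k - d + 1) = P.j₀ - d + 1 := Nat.mod_eq_of_lt (by omega)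
    have h2 : d + (P.j₀ - d) = P.j₀ := by omega
    have h3 : d + (P.j₀ - d + 1) = P.j₀ + 1 := by omega
    simp only [h1, h2, h3]
    exact P.cj
  · have h1 : P.i₀ - d ≠ k - d := by omega
    have h2 : P.j₀ - d ≠ k - d := by omega
    have h3 : d + (P.i₀ - d) = P.i₀ := by omega
    have h4 : d + (P.j₀ - d) = P.j₀ := by omega
    simpa [h1, h2, h3, h4] using P.qij
  · intro m hm c
    by_cases hmd : m = k - d
    · subst hmd
      simp only [Nat.mod_self, hdk', hlk, Nat.add_zero] at c
      exact absurd wrapiff c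
    · have h1 : (m + 1) % (k - d + 1) = m + 1 := Nat.mod_eq_of_lt (by omega)
      simp only [h1, ← Nat.add_assoc] at c
      rcases P.ccomp (d + m) (by omega) c with e | e <;> omega

/-- Shortening, case: one crossing in each arc. -/
lemma core3 (P : Pre K H k) (d : ℕ) (hd2 : 2 ≤ d) (hdk : d + 2 ≤ k) (z : α)
    (hz0 : z ∈ P.l 0) (hzd : z ∈ P.l d)
    (hi : P.i₀ < d) (hj : d ≤ P.j₀) : ∃ k', k' < k ∧ Nonempty (Pre K H k') := by
  have hI := P.hi₀
  have hJ := P.hj₀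
  have hIJ := P.hij
  have crossiff : ¬(P.l 0 ∈ K ↔ P.l d ∈ K) := by
    have c1 : P.l 0 ∈ K ↔ P.l P.i₀ ∈ K := by
      refine P.const (Nat.zero_le _) ?_
      intro m hm hm'
      by_contra c
      rcases P.ccomp m (by omega) c with e | e <;> omega
    have c2 : P.l (P.i₀ + 1) ∈ K ↔ P.l d ∈ K := by
      refine P.const (by omega) ?_
      intro m hm hm'
      by_contra c
      rcases P.ccomp m (by omega) c with e | e <;> omega
    intro hiff
    exact P.ci (c1.symm.trans (hiff.trans c2.symm))
  by_cases hz : z = P.q P.i₀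
  · -- use the second arc
    subst hz
    have hzq : P.q P.j₀ ≠ P.q P.i₀ := Ne.symm P.qij
    have hlk : P.l k = P.l 0 := lk_eq_l0 P
    have hdk' : d + (k - d) = k := by omega
    refine ⟨k - d + 1, by omega, ⟨mkPre K H (k - d + 1) (fun m => P.l (d + m))
      (fun m => if m = k - d then P.q P.i₀ else P.q (d + m)) (by omega)
      ?_ ?_ ?_ ?_ (P.j₀ - d) (k - d) (by omega) (by omega) (by omega) ?_ ?_ ?_ ?_⟩⟩
    · intro m hm m' hm' e
      have e2 : P.l ((d + m) % k) = P.l ((d + m') % k) := by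
        rw [P.lmod, P.lmod]; exact e
      have := P.linj _ (Nat.mod_lt _ (by omega)) _ (Nat.mod_lt _ (by omega)) e2
      have e3 : (d + m) % k = if d + m = k then 0 else d + m := by
        split
        · simp [*]
        · exact Nat.mod_eq_of_lt (by omega)
      have e4 : (d + m') % k = if d + m' = k then 0 else d + m' := by
        split
        · simp [*]
        · exact Nat.mod_eq_of_lt (by omega)
      rw [e3, e4] at this
      split at this <;> split at this <;> omega
    · intro m _; exact P.lmem _
    · intro m hm
      by_cases hmd : m = k - d
      · subst hmd
        simp only [if_pos rfl, hdk', hlk]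
        exact hz0
      · simp only [if_neg hmd]
        exact P.qmem₁ (d + m)
    · intro m hm
      by_cases hmd : m = k - d
      · subst hmd
        simp only [if_pos rfl, Nat.mod_self, Nat.add_zero]
        exact hzd
      · have h1 : (m + 1) % (k - d + 1) = m + 1 := Nat.mod_eq_of_lt (by omega)
        simp only [if_neg hmd, h1, ← Nat.add_assoc]
        exact P.qmem₂ (d + m)
    · have h1 : (P.j₀ - d + 1) % (k - d + 1) = P.j₀ - d + 1 := Nat.mod_eq_of_lt (by omega)
      have h2 : d + (P.j₀ - d) = P.j₀ := by omega
      have h3 : d + (P.j₀ - d + 1) = P.j₀ + 1 := by omega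
      simp only [h1, h2, h3]
      exact P.cj
    · have h1 : (k - d + 1) % (k - d + 1) = 0 := Nat.mod_self _
      simp only [h1, hdk', hlk, Nat.add_zero]
      exact crossiff
    · have h1 : P.j₀ - d ≠ k - d := by omega
      have h2 : d + (P.j₀ - d) = P.j₀ := by omega
      simpa [h1, h2] using hzq
    · intro m hm c
      by_cases hmd : m = k - d
      · subst hmd; right; rfl
      · have h1 : (m + 1) % (k - d + 1) = m + 1 := Nat.mod_eq_of_lt (by omega)
        simp only [h1, ← Nat.add_assoc] at c
        rcases P.ccomp (d + m) (by omega) c with e | e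
        · omega
        · left; omega
  · -- use the first arc
    refine ⟨d + 1, by omega, ⟨mkPre K H (d + 1) P.l
      (fun m => if m = d then z else P.q m) (by omega)
      ?_ ?_ ?_ ?_ P.i₀ d (by omega) (by omega) (by omega) ?_ ?_ ?_ ?_⟩⟩
    · intro m hm m' hm' e
      exact P.linj m (by omega) m' (by omega) e
    · intro m _; exact P.lmem m
    · intro m hm
      by_cases hmd : m = d
      · subst hmd; simpa using hzd
      · simpa [hmd] using P.qmem₁ m
    · intro m hm
      by_cases hmd : m = d
      · subst hmd; simpa [Nat.mod_self] using hz0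
      · have h1 : (m + 1) % (d + 1) = m + 1 := Nat.mod_eq_of_lt (by omega)
        simpa [hmd, h1] using P.qmem₂ m
    · have h1 : (P.i₀ + 1) % (d + 1) = P.i₀ + 1 := Nat.mod_eq_of_lt (by omega)
      rw [h1]; exact P.ci
    · have h1 : (d + 1) % (d + 1) = 0 := Nat.mod_self _
      rw [h1]
      exact fun c => crossiff c.symm
    · have h1 : P.i₀ ≠ d := by omega
      simp only [if_neg h1, if_pos rfl]
      exact fun e => hz e.symm
    · intro m hm c
      by_cases hmd : m = d
      · right; exact hmd
      · have h1 : (m + 1) % (d + 1) = m + 1 := Nat.mod_eq_of_lt (by omega)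
        rw [h1] at c
        rcases P.ccomp m (by omega) c with e | e
        · left; exact e
        · omega

/-- Shortening: a chord (a point on two non-adjacent lines) yields a smaller pre-cycle. -/
lemma core (P : Pre K H k) (d : ℕ) (hd2 : 2 ≤ d) (hdk : d + 2 ≤ k) (z : α)
    (hz0 : z ∈ P.l 0) (hzd : z ∈ P.l d) : ∃ k', k' < k ∧ Nonempty (Pre K H k') := by
  by_cases hi : P.i₀ < d <;> by_cases hj : P.j₀ < d
  · exact ⟨d + 1, by omega, core1 P d hd2 hdk z hz0 hzd hi hj⟩
  · exact core3 P d hd2 hdk z hz0 hzd hi (not_lt.mp hj)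
  · exact core3 P.swap d hd2 hdk z hz0 hzd hj (not_lt.mp hi)
  · exact ⟨k - d + 1, by omega, core2 P d hd2 hdk z hz0 hzd (not_lt.mp hi) (not_lt.mp hj)⟩

variable (M : PLC α)

lemma adj_point (hsub : ∀ L ∈ K ∪ H, L ∈ M.lines) (P : Pre K H k) {i : ℕ} (hik : i < k)
    {z : α} (h1 : z ∈ P.l i) (h2 : z ∈ P.l (i + 1)) : z = P.q i := by
  have hk := P.hk
  have hne : P.l i ≠ P.l (i + 1) := by
    intro e
    by_cases hik1 : i + 1 < k
    · exact (by omega : i ≠ i + 1) (P.linj i hik (i + 1) hik1 e)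
    · have hik2 : i + 1 = k := by omega
      rw [hik2, lk_eq_l0 P] at e
      have := P.linj i hik 0 (by omega) e
      omega
  have hcard := M.inter_le_one _ (hsub _ (P.lmem i)) _ (hsub _ (P.lmem (i + 1))) hne
  have hz : z ∈ P.l i ∩ P.l (i + 1) := Finset.mem_inter.mpr ⟨h1, h2⟩
  have hq : P.q i ∈ P.l i ∩ P.l (i + 1) := Finset.mem_inter.mpr ⟨P.qmem₁ i, P.qmem₂ i⟩
  exact Finset.card_le_one.mp hcard _ hz _ hq

lemma rotate_l (P : Pre K H k) (i : ℕ) (hi : i ≤ k) (m : ℕ) :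
    (P.rotate i hi).l m = P.l (m % k + i) := rfl

/-- The master structural lemma for a minimal pre-cycle: any point lying on two
distinct lines is the designated point between two consecutive lines. -/
lemma master (hsub : ∀ L ∈ K ∪ H, L ∈ M.lines) (P : Pre K H k)
    (hmin : ∀ k', k' < k → ¬ Nonempty (Pre K H k')) :
    ∀ i j, i < k → j < k → i ≠ j → ∀ z, z ∈ P.l i → z ∈ P.l j →
    ((j = i + 1 ∨ (i = k - 1 ∧ j = 0)) ∧ z = P.q i) ∨
    ((i = j + 1 ∨ (j = k - 1 ∧ i = 0)) ∧ z = P.q j) := by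
  have hk := P.hk
  suffices aux : ∀ i j, i < j → j < k → ∀ z, z ∈ P.l i → z ∈ P.l j →
      ((j = i + 1 ∨ (i = k - 1 ∧ j = 0)) ∧ z = P.q i) ∨
      ((i = j + 1 ∨ (j = k - 1 ∧ i = 0)) ∧ z = P.q j) by
    intro i j hik hjk hij z hzi hzj
    rcases lt_or_gt_of_ne hij with hlt | hlt
    · exact aux i j hlt hjk z hzi hzj
    · exact (aux j i hlt hik z hzj hzi).symm
  intro i j hij hjk z hzi hzj
  by_cases hadj : j = i + 1
  · subst hadj
    exact Or.inl ⟨Or.inl rfl, adj_point M hsub P (by omega) hzi hzj⟩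
  by_cases hwrap : i = 0 ∧ j = k - 1
  · refine Or.inr ⟨Or.inr ⟨hwrap.2, hwrap.1⟩, ?_⟩
    obtain ⟨rfl, rfl⟩ := hwrap
    refine adj_point M hsub P (by omega) hzj ?_
    have e : k - 1 + 1 = k := by omega
    rw [e, lk_eq_l0 P]
    exact hzi
  · exfalso
    have hior : i ≠ 0 ∨ j ≠ k - 1 := by tauto
    have hd2 : 2 ≤ j - i := by omega
    have hdk : (j - i) + 2 ≤ k := by omega
    have hik : i ≤ k := by omega
    have hz0 : z ∈ (P.rotate i hik).l 0 := by
      rw [rotate_l]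
      simpa using hzi
    have hzd : z ∈ (P.rotate i hik).l (j - i) := by
      rw [rotate_l]
      have e1 : (j - i) % k = j - i := Nat.mod_eq_of_lt (by omega)
      have e2 : j - i + i = j := by omega
      rw [e1, e2]
      exact hzj
    obtain ⟨k', hk', hne'⟩ := core (P.rotate i hik) (j - i) hd2 hdk z hz0 hzd
    exact hmin k' hk' hne'

lemma three_le_k (hsub : ∀ L ∈ K ∪ H, L ∈ M.lines) (P : Pre K H k) : 3 ≤ k := by
  have hk := P.hk
  by_contra hcon
  have hk2 : k = 2 := by omega
  subst hk2
  have hne : P.l 0 ≠ P.l 1 := fun e => by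
    have := P.linj 0 (by omega) 1 (by omega) e
    omega
  have hcard := M.inter_le_one _ (hsub _ (P.lmem 0)) _ (hsub _ (P.lmem 1)) hne
  have h01 : P.q 0 ∈ P.l 0 ∩ P.l 1 := Finset.mem_inter.mpr ⟨P.qmem₁ 0, P.qmem₂ 0⟩
  have hl2 : P.l 2 = P.l 0 := by
    have := P.lper 0
    simpa using this
  have h11 : P.q 1 ∈ P.l 0 ∩ P.l 1 :=
    Finset.mem_inter.mpr ⟨by rw [← hl2]; exact P.qmem₂ 1, P.qmem₁ 1⟩
  have heq : P.q 0 = P.q 1 := Finset.card_le_one.mp hcard _ h01 _ h11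
  have hi := P.hi₀
  have hj := P.hj₀
  have hij := P.hij
  refine P.qij ?_
  have hcases : (P.i₀ = 0 ∧ P.j₀ = 1) ∨ (P.i₀ = 1 ∧ P.j₀ = 0) := by omega
  rcases hcases with ⟨e1, e2⟩ | ⟨e1, e2⟩ <;> rw [e1, e2]
  · exact heq
  · exact heq.symm

lemma three_lines (hsub : ∀ L ∈ K ∪ H, L ∈ M.lines) (P : Pre K H k)
    (hmin : ∀ k', k' < k → ¬ Nonempty (Pre K H k'))
    {a b c : ℕ} (ha : a < k) (hb : b < k) (hc : c < k)
    (hab : a ≠ b) (hbc : b ≠ c) (hac : a ≠ c) {z : α}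
    (hza : z ∈ P.l a) (hzb : z ∈ P.l b) (hzc : z ∈ P.l c) : False := by
  have hk3 := three_le_k M hsub P
  have h1 := master M hsub P hmin a b ha hb hab z hza hzb
  have h2 := master M hsub P hmin b c hb hc hbc z hzb hzc
  have h3 := master M hsub P hmin a c ha hc hac z hza hzc
  have hi := P.hi₀
  have hj := P.hj₀
  have hij := P.hij
  rcases h1 with ⟨hA, hqA⟩ | ⟨hA, hqA⟩ <;> rcases h2 with ⟨hB, hqB⟩ | ⟨hB, hqB⟩ <;>
    rcases h3 with ⟨hC, hqC⟩ | ⟨hC, hqC⟩ <;>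
    rcases hA with hA | ⟨hA1, hA2⟩ <;> rcases hB with hB | ⟨hB1, hB2⟩ <;>
    rcases hC with hC | ⟨hC1, hC2⟩ <;>
    first
      | omega
      | (apply P.qij
         have hall : ∀ m, m < k → P.q m = z := by
           intro m hm
           have hm3 : m = a ∨ m = b ∨ m = c := by omega
           rcases hm3 with rfl | rfl | rfl <;>
             first | exact hqA.symm | exact hqB.symm | exact hqC.symm
         rw [hall P.i₀ hi, hall P.j₀ hj])

lemma qinj (hsub : ∀ L ∈ K ∪ H, L ∈ M.lines) (P : Pre K H k)
    (hmin : ∀ k', k' < k → ¬ Nonempty (Pre K H k')) :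
    ∀ u v, u < k → v < k → u ≠ v → P.q u ≠ P.q v := by
  intro u v hu hv huv he
  have hk3 := three_le_k M hsub P
  have hz1 : P.q u ∈ P.l u := P.qmem₁ u
  have hz2 : P.q u ∈ P.l ((u + 1) % k) := by rw [P.lmod]; exact P.qmem₂ u
  have hz3 : P.q u ∈ P.l v := by rw [he]; exact P.qmem₁ v
  have hz4 : P.q u ∈ P.l ((v + 1) % k) := by rw [P.lmod, he]; exact P.qmem₂ v
  have hu' : (u + 1) % k < k := Nat.mod_lt _ (by omega)
  have hv' : (v + 1) % k < k := Nat.mod_lt _ (by omega)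
  have su : (u + 1) % k = if u + 1 = k then 0 else u + 1 := by
    split
    · simp [*]
    · exact Nat.mod_eq_of_lt (by omega)
  have sv : (v + 1) % k = if v + 1 = k then 0 else v + 1 := by
    split
    · simp [*]
    · exact Nat.mod_eq_of_lt (by omega)
  by_cases h1 : (u + 1) % k = v ∧ (v + 1) % k = u
  · obtain ⟨e1, e2⟩ := h1
    rw [su] at e1
    rw [sv] at e2
    split_ifs at e1 e2 <;> omega
  · have hu'u : (u + 1) % k ≠ u := by rw [su]; split <;> omega
    have hv'v : (v + 1) % k ≠ v := by rw [sv]; split <;> omega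
    have hu'v' : (u + 1) % k ≠ (v + 1) % k := by
      rw [su, sv]; split <;> split <;> omega
    by_cases h2 : (u + 1) % k = v
    · have h3 : (v + 1) % k ≠ u := fun e => h1 ⟨h2, e⟩
      exact three_lines M hsub P hmin hu hu' hv' (Ne.symm hu'u) hu'v'
        (Ne.symm h3) hz1 hz2 hz4
    · by_cases h4 : (v + 1) % k = u
      · exact three_lines M hsub P hmin hu hu' hv (Ne.symm hu'u) h2 huv hz1 hz2 hz3
      · exact three_lines M hsub P hmin hu' hv hv' h2 (Ne.symm hv'v) hu'v' hz2 hz3 hz4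

open Fin.NatCast in
lemma exists_pre (hK : IsCycle M K) (hH : IsCycle M H)
    (hdisj : ∀ L, L ∈ K → L ∉ H) {x y : α} (hxy : x ≠ y)
    (hxK : x ∈ K.sup id) (hxH : x ∈ H.sup id)
    (hyK : y ∈ K.sup id) (hyH : y ∈ H.sup id) :
    ∃ k, Nonempty (Pre K H k) := by
  classical
  obtain ⟨hKsub, nK, kl, kp, hkinj, hkmem, hkpinj, hkp, hkext⟩ := hK
  obtain ⟨hHsub, nH, hl, hp, hhinj, hhmem, hhpinj, hhp, hhext⟩ := hH
  obtain ⟨Lx, hLxK, hxLx⟩ := Finset.mem_sup.mp hxK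
  obtain ⟨ix, rfl⟩ := (hkmem Lx).mp hLxK
  obtain ⟨Ly, hLyK, hyLy⟩ := Finset.mem_sup.mp hyK
  obtain ⟨iy, rfl⟩ := (hkmem Ly).mp hLyK
  obtain ⟨Mx, hMxH, hxMx⟩ := Finset.mem_sup.mp hxH
  obtain ⟨ux, rfl⟩ := (hhmem Mx).mp hMxH
  obtain ⟨My, hMyH, hyMy⟩ := Finset.mem_sup.mp hyH
  obtain ⟨uy, rfl⟩ := (hhmem My).mp hMyH
  simp only [id] at hxLx hyLy hxMx hyMy
  have klK : ∀ i, kl i ∈ K := fun i => (hkmem _).mpr ⟨i, rfl⟩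
  have hlH : ∀ i, hl i ∈ H := fun i => (hhmem _).mpr ⟨i, rfl⟩
  have hlnK : ∀ i, hl i ∉ K := fun i h => hdisj _ h (hlH i)
  set a := (iy - ix).val + 1 with ha
  set b := (ux - uy).val + 1 with hb
  have haR : a ≤ nK + 2 := by have := (iy - ix).isLt; omega
  have hbS : b ≤ nH + 2 := by have := (ux - uy).isLt; omega
  have valcastK : ∀ m : ℕ, m < nK + 2 → ((m : Fin (nK + 2)).val = m) := fun m hm => by
    rw [Fin.val_natCast]; exact Nat.mod_eq_of_lt hm
  have valcastH : ∀ m : ℕ, m < nH + 2 → ((m : Fin (nH + 2)).val = m) := fun m hm => by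
    rw [Fin.val_natCast]; exact Nat.mod_eq_of_lt hm
  have kcastinj : ∀ m m' : ℕ, m < a → m' < a →
      (m : Fin (nK + 2)) = (m' : Fin (nK + 2)) → m = m' := by
    intro m m' hm hm' e
    have := congrArg Fin.val e
    rwa [valcastK m (by omega), valcastK m' (by omega)] at this
  have hcastinj : ∀ m m' : ℕ, m < b → m' < b →
      (m : Fin (nH + 2)) = (m' : Fin (nH + 2)) → m = m' := by
    intro m m' hm hm' e
    have := congrArg Fin.val e
    rwa [valcastH m (by omega), valcastH m' (by omega)] at this
  have key1 : (((a - 1 : ℕ)) : Fin (nK + 2)) = iy - ix := by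
    have e : a - 1 = (iy - ix).val := by omega
    rw [e, Fin.cast_val_eq_self]
  have klIy : kl (ix + ((a - 1 : ℕ) : Fin (nK + 2))) = kl iy := by
    rw [key1, add_comm, sub_add_cancel]
  have key2 : (((b - 1 : ℕ)) : Fin (nH + 2)) = ux - uy := by
    have e : b - 1 = (ux - uy).val := by omega
    rw [e, Fin.cast_val_eq_self]
  have hlUx : hl (uy + ((b - 1 : ℕ) : Fin (nH + 2))) = hl ux := by
    rw [key2, add_comm, sub_add_cancel]
  refine ⟨a + b, ⟨mkPre K H (a + b)
    (fun m => if m < a then kl (ix + (m : Fin (nK + 2)))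
      else hl (uy + ((m - a : ℕ) : Fin (nH + 2))))
    (fun m => if m + 1 < a then kp (ix + (m : Fin (nK + 2)))
      else if m + 1 = a then y
      else if m + 1 < a + b then hp (uy + ((m - a : ℕ) : Fin (nH + 2)))
      else x)
    (by omega) ?_ ?_ ?_ ?_ (a - 1) (a + b - 1) (by omega) (by omega) (by omega)
    ?_ ?_ ?_ ?_⟩⟩
  · -- injectivity
    intro m hm m' hm' e
    by_cases h1 : m < a <;> by_cases h2 : m' < a
    · simp only [if_pos h1, if_pos h2] at e
      exact kcastinj m m' h1 h2 (add_left_cancel (hkinj e))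
    · simp only [if_pos h1, if_neg h2] at e
      exact absurd (klK _) (by rw [e]; exact hlnK _)
    · simp only [if_neg h1, if_pos h2] at e
      exact absurd (klK _) (by rw [← e]; exact hlnK _)
    · simp only [if_neg h1, if_neg h2] at e
      have := hcastinj (m - a) (m' - a) (by omega) (by omega) (add_left_cancel (hhinj e))
      omega
  · -- membership
    intro m hm
    by_cases h1 : m < a
    · simp only [if_pos h1]
      exact Finset.mem_union_left _ (klK _)
    · simp only [if_neg h1]
      exact Finset.mem_union_right _ (hlH _)
  · -- q on first line
    intro m hm
    by_cases hA : m + 1 < a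
    · simp only [if_pos hA, if_pos (show m < a by omega)]
      exact (hkp _ _).mpr (Or.inl rfl)
    · by_cases hB : m + 1 = a
      · simp only [if_neg hA, if_pos hB, if_pos (show m < a by omega)]
        have e : m = a - 1 := by omega
        rw [e, klIy]
        exact hyLy
      · by_cases hC : m + 1 < a + b
        · simp only [if_neg hA, if_neg hB, if_pos hC, if_neg (show ¬ m < a by omega)]
          exact (hhp _ _).mpr (Or.inl rfl)
        · simp only [if_neg hA, if_neg hB, if_neg hC, if_neg (show ¬ m < a by omega)]
          have e : m - a = b - 1 := by omega
          rw [e, hlUx]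
          exact hxMx
  · -- q on second line
    intro m hm
    by_cases hA : m + 1 < a
    · have e0 : (m + 1) % (a + b) = m + 1 := Nat.mod_eq_of_lt (by omega)
      simp only [if_pos hA, e0]
      have ec : ((m + 1 : ℕ) : Fin (nK + 2)) = (m : Fin (nK + 2)) + 1 := by
        push_cast; ring
      simp only [ec, ← add_assoc]
      exact (hkp _ _).mpr (Or.inr rfl)
    · by_cases hB : m + 1 = a
      · have e0 : (m + 1) % (a + b) = a := by rw [hB]; exact Nat.mod_eq_of_lt (by omega)
        simp only [if_neg hA, if_pos hB, e0, if_neg (lt_irrefl a), Nat.sub_self,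
          Nat.cast_zero, add_zero]
        exact hyMy
      · by_cases hC : m + 1 < a + b
        · have e0 : (m + 1) % (a + b) = m + 1 := Nat.mod_eq_of_lt (by omega)
          simp only [if_neg hA, if_neg hB, if_pos hC, e0, if_neg (show ¬ m + 1 < a by omega)]
          have ec : ((m + 1 - a : ℕ) : Fin (nH + 2)) = ((m - a : ℕ) : Fin (nH + 2)) + 1 := by
            rw [show m + 1 - a = (m - a) + 1 by omega]
            push_cast; ring
          simp only [ec, ← add_assoc]
          exact (hhp _ _).mpr (Or.inr rfl)
        · have hD : m + 1 = a + b := by omega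
          have e0 : (m + 1) % (a + b) = 0 := by rw [hD]; exact Nat.mod_self _
          simp only [if_neg hA, if_neg hB, if_neg hC, e0, if_pos (show (0 : ℕ) < a by omega),
            Nat.cast_zero, add_zero]
          exact hxLx
  · -- crossing at a - 1
    have e1 : a - 1 + 1 = a := by omega
    have e0 : a % (a + b) = a := Nat.mod_eq_of_lt (by omega)
    simp only [e1, e0, if_pos (show a - 1 < a by omega), if_neg (lt_irrefl a)]
    intro hiff
    exact hlnK _ (hiff.mp (klK _))
  · -- crossing at a + b - 1
    have e1 : a + b - 1 + 1 = a + b := by omega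
    simp only [e1, Nat.mod_self, if_neg (show ¬ a + b - 1 < a by omega),
      if_pos (show (0 : ℕ) < a by omega), Nat.cast_zero, add_zero]
    intro hiff
    exact hlnK _ (hiff.mpr (klK _))
  · -- the two crossing points differ
    simp only [if_neg (show ¬ (a - 1) + 1 < a by omega), if_pos (show (a - 1) + 1 = a by omega),
      if_neg (show ¬ (a + b - 1) + 1 < a by omega), if_neg (show ¬ (a + b - 1) + 1 = a by omega),
      if_neg (show ¬ (a + b - 1) + 1 < a + b by omega)]
    exact hxy.symm
  · -- completeness of crossings
    intro m hm c
    by_cases hA : m + 1 < a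
    · exfalso
      have e0 : (m + 1) % (a + b) = m + 1 := Nat.mod_eq_of_lt (by omega)
      simp only [e0, if_pos hA, if_pos (show m < a by omega)] at c
      exact c (iff_of_true (klK _) (klK _))
    · by_cases hB : m + 1 = a
      · left; omega
      · by_cases hC : m + 1 < a + b
        · exfalso
          have e0 : (m + 1) % (a + b) = m + 1 := Nat.mod_eq_of_lt (by omega)
          simp only [e0, if_neg (show ¬ m < a by omega), if_neg (show ¬ m + 1 < a by omega)] at c
          exact c (iff_of_false (hlnK _) (hlnK _))
        · right; omega

end Core

end CyclesProof

/-- If every line of a point-line configuration `M` lies in at most one cycle, then any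
two distinct cycles of `M` share at most one point. -/
theorem cycles_share_at_most_one_point {α : Type*} [DecidableEq α] (M : PLC α)
    (h : ∀ L ∈ M.lines, ∀ Ls₁ Ls₂ : Finset (Finset α),
      IsCycle M Ls₁ → IsCycle M Ls₂ → L ∈ Ls₁ → L ∈ Ls₂ → Ls₁ = Ls₂)
    (K H : Finset (Finset α)) (hK : IsCycle M K) (hH : IsCycle M H) (hne : K ≠ H) :
    ((K.sup id) ∩ (H.sup id)).card ≤ 1 := by
  classical
  by_contra hcard
  push_neg at hcard
  obtain ⟨x, hx, y, hy, hxy⟩ := Finset.one_lt_card.mp hcard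
  rw [Finset.mem_inter] at hx hy
  have hdisj : ∀ L, L ∈ K → L ∉ H := fun L hLK hLH => hne (h L (hK.1 hLK) K H hK hH hLK hLH)
  have hsub : ∀ L ∈ K ∪ H, L ∈ M.lines := by
    intro L hL
    rcases Finset.mem_union.mp hL with h' | h'
    · exact hK.1 h'
    · exact hH.1 h'
  obtain ⟨k0, hk0⟩ := CyclesProof.exists_pre M hK hH hdisj hxy hx.1 hx.2 hy.1 hy.2
  have hSne : {k | Nonempty (CyclesProof.Pre K H k)}.Nonempty := ⟨k0, hk0⟩
  obtain ⟨P⟩ : Nonempty (CyclesProof.Pre K H (sInf {k | Nonempty (CyclesProof.Pre K H k)})) := Nat.sInf_mem hSne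
  have hmin : ∀ k', k' < sInf {k | Nonempty (CyclesProof.Pre K H k)} → ¬ Nonempty (CyclesProof.Pre K H k') :=
    fun k' h1 h2 => Nat.notMem_of_lt_sInf h1 h2
  set k := sInf {k | Nonempty (CyclesProof.Pre K H k)} with hkdef
  have hk3 : 3 ≤ k := CyclesProof.three_le_k M hsub P
  have hM := CyclesProof.master M hsub P hmin
  have hQI := CyclesProof.qinj M hsub P hmin
  obtain ⟨n, hn⟩ : ∃ n, k = n + 2 := ⟨k - 2, by omega⟩
  clear hkdef
  clear_value k
  subst hn
  have hval : ∀ i : Fin (n + 2), (i : ℕ) < n + 2 := fun i => i.isLt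
  set L : Fin (n + 2) → Finset α := fun i => P.l i.val with hLdef
  set Q : Fin (n + 2) → α := fun i => P.q i.val with hQdef
  set Ls : Finset (Finset α) := Finset.image L Finset.univ with hLsdef
  have hmemIff : ∀ L', L' ∈ Ls ↔ ∃ i, L i = L' := by
    intro L'
    simp [hLsdef, Finset.mem_image]
  have hLinj : Function.Injective L := fun i j e => Fin.ext (P.linj _ (hval i) _ (hval j) e)
  have hQinj : Function.Injective Q := by
    intro i j e
    by_contra hne'
    exact hQI i.val j.val (hval i) (hval j) (fun e' => hne' (Fin.ext e')) e
  have hvalsucc : ∀ i : Fin (n + 2), P.l ((i + 1 : Fin (n + 2)).val) = P.l (i.val + 1) := by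
    intro i
    apply P.lcong
    have hv : ((i + 1 : Fin (n + 2)).val) = (i.val + 1) % (n + 2) := by
      rw [Fin.val_add, Fin.val_one]
    rw [hv, Nat.mod_mod_of_dvd _ dvd_rfl]
  have hinc : ∀ i j : Fin (n + 2), Q i ∈ L j ↔ j = i ∨ j = i + 1 := by
    intro i j
    constructor
    · intro hmem'
      by_cases hji : j = i
      · exact Or.inl hji
      · have hvne : i.val ≠ j.val := fun e => hji (Fin.ext e.symm)
        rcases hM i.val j.val (hval i) (hval j) hvne (Q i) (P.qmem₁ _) hmem' with
          ⟨hadj, _⟩ | ⟨_, heq⟩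
        · right
          apply Fin.ext
          have hv : ((i + 1 : Fin (n + 2)).val) = (i.val + 1) % (n + 2) := by
            rw [Fin.val_add, Fin.val_one]
          rcases hadj with e | ⟨e1, e2⟩
          · rw [hv, e, Nat.mod_eq_of_lt (by have := j.isLt; omega)]
          · rw [hv, e2, e1]
            simp
        · exact absurd heq (hQI i.val j.val (hval i) (hval j) hvne)
    · intro hj
      rcases hj with rfl | rfl
      · exact P.qmem₁ _
      · show P.q i.val ∈ P.l ((i + 1 : Fin (n + 2)).val)
        rw [hvalsucc i]
        exact P.qmem₂ _
  have hext : ∀ z ∈ Ls.sup id, z ∉ Set.range Q → ∃! j, z ∈ L j := by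
    intro z hz hnr
    obtain ⟨L', hL', hzL'⟩ := Finset.mem_sup.mp hz
    obtain ⟨i, rfl⟩ := (hmemIff L').mp hL'
    simp only [id] at hzL'
    refine ⟨i, hzL', ?_⟩
    intro j hj
    by_contra hji
    have hvne : j.val ≠ i.val := fun e => hji (Fin.ext e)
    rcases hM j.val i.val (hval j) (hval i) hvne z hj hzL' with ⟨_, heq⟩ | ⟨_, heq⟩
    · exact hnr ⟨j, heq.symm⟩
    · exact hnr ⟨i, heq.symm⟩
  have hLssub : Ls ⊆ M.lines := by
    intro L' hL'
    obtain ⟨i, rfl⟩ := (hmemIff L').mp hL'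
    exact hsub _ (P.lmem _)
  have hcyc : IsCycle M Ls := ⟨hLssub, n, L, Q, hLinj, hmemIff, hQinj, hinc, hext⟩
  have hl1 : P.l P.i₀ ∈ Ls := by
    refine (hmemIff _).mpr ⟨⟨P.i₀, P.hi₀⟩, rfl⟩
  have hl2 : P.l (P.i₀ + 1) ∈ Ls := by
    refine (hmemIff _).mpr ⟨⟨(P.i₀ + 1) % (n + 2), Nat.mod_lt _ (by omega)⟩, ?_⟩
    exact P.lmod _
  by_cases hK1 : P.l P.i₀ ∈ K
  · have hK2 : P.l (P.i₀ + 1) ∉ K := fun h' => P.ci (iff_of_true hK1 h')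
    have hH2 : P.l (P.i₀ + 1) ∈ H := (Finset.mem_union.mp (P.lmem _)).resolve_left hK2
    have hKLs : K = Ls := h (P.l P.i₀) (hsub _ (P.lmem _)) K Ls hK hcyc hK1 hl1
    rw [← hKLs] at hl2
    exact hdisj _ hl2 hH2
  · have hH1 : P.l P.i₀ ∈ H := (Finset.mem_union.mp (P.lmem _)).resolve_left hK1
    have hK2 : P.l (P.i₀ + 1) ∈ K := by
      by_contra h'
      exact P.ci (iff_of_false hK1 h')
    have hKLs : K = Ls := h (P.l (P.i₀ + 1)) (hsub _ (P.lmem _)) K Ls hK hcyc hK2 hl2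
    rw [← hKLs] at hl1
    exact hdisj _ hl1 hH1
end

section
/- If M is a nilpotent point-line configuration on a finite set of d points, then there exists an ordering p₁, ..., p_d of the points such that for every i, the point pᵢ lies on at most one line of the restricted configuration M | {p₁, ..., pᵢ}. -/
variable {α : Type*} [DecidableEq α]

/-- The restriction of a point-line configuration to a subset `S` of points: its lines
are the traces on `S` of lines of `M` that keep at least three points. -/
def PLC.restrict (M : PLC α) (S : Finset α) : PLC α where
  E := M.E ∩ S
  lines := (M.lines.image (· ∩ S)).filter (fun l => 3 ≤ l.card)
  subset_ground := by
    intro l hl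
    simp only [Finset.mem_filter, Finset.mem_image] at hl
    obtain ⟨⟨l₀, hl₀, rfl⟩, -⟩ := hl
    exact Finset.inter_subset_inter (M.subset_ground l₀ hl₀) (Finset.Subset.refl S)
  three_le := by
    intro l hl
    exact (Finset.mem_filter.mp hl).2
  inter_le_one := by
    intro l hl l' hl' hne
    simp only [Finset.mem_filter, Finset.mem_image] at hl hl'
    obtain ⟨⟨l₀, hl₀, rfl⟩, -⟩ := hl
    obtain ⟨⟨l₀', hl₀', rfl⟩, -⟩ := hl'
    have h₀ : l₀ ≠ l₀' := by rintro rfl; exact hne rfl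
    calc ((l₀ ∩ S) ∩ (l₀' ∩ S)).card ≤ (l₀ ∩ l₀').card := by
          apply Finset.card_le_card
          intro x hx
          simp only [Finset.mem_inter] at hx ⊢
          tauto
      _ ≤ 1 := M.inter_le_one l₀ hl₀ l₀' hl₀' h₀

/-- The lines of `M` through a point `p`. -/
def PLC.linesThrough (M : PLC α) (p : α) : Finset (Finset α) :=
  M.lines.filter (fun l => p ∈ l)

/-- The points of `M` lying on at least two lines. -/
def PLC.S (M : PLC α) : Finset α :=
  M.E.filter (fun p => 2 ≤ (M.linesThrough p).card)

/-- The nilpotency chain `M₀ = M`, `M_{j+1} = M_j | S_{M_j}`. -/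
def PLC.chainS (M : PLC α) : ℕ → PLC α
  | 0 => M
  | j + 1 => (M.chainS j).restrict (M.chainS j).S

/-- `M` is nilpotent if its nilpotency chain reaches the empty configuration. -/
def PLC.Nilpotent (M : PLC α) : Prop :=
  ∃ j, (M.chainS j).E = ∅


namespace PLCAux

variable {α : Type*} [DecidableEq α]

lemma S_subset (M : PLC α) : M.S ⊆ M.E := Finset.filter_subset _ _

lemma chain_E_succ (M : PLC α) (j : ℕ) :
    (M.chainS (j+1)).E = (M.chainS j).E ∩ (M.chainS j).S := rfl

lemma chain_E_antitone (M : PLC α) : ∀ {j k : ℕ}, j ≤ k →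
    (M.chainS k).E ⊆ (M.chainS j).E := by
  intro j k hjk
  induction hjk with
  | refl => exact Finset.Subset.refl _
  | step h ih => exact fun x hx => ih ((chain_E_succ M _ ▸ hx : x ∈ _ ∩ _) |> Finset.mem_inter.mp |>.1)

lemma chain_lines (M : PLC α) (j : ℕ) :
    (M.chainS j).lines
      = (M.lines.image (· ∩ (M.chainS j).E)).filter (fun l => 3 ≤ l.card) := by
  induction j with
  | zero =>
    ext m
    simp only [PLC.chainS, Finset.mem_filter, Finset.mem_image]
    constructor
    · intro hm
      exact ⟨⟨m, hm, Finset.inter_eq_left.mpr (M.subset_ground m hm)⟩, M.three_le m hm⟩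
    · rintro ⟨⟨l, hl, rfl⟩, -⟩
      rwa [Finset.inter_eq_left.mpr (M.subset_ground l hl)]
  | succ j ih =>
    have hE : (M.chainS (j+1)).E = (M.chainS j).E ∩ (M.chainS j).S := rfl
    have hlines : (M.chainS (j+1)).lines
        = ((M.chainS j).lines.image (· ∩ (M.chainS j).S)).filter (fun l => 3 ≤ l.card) := rfl
    rw [hlines, ih, hE]
    ext m
    simp only [Finset.mem_filter, Finset.mem_image]
    constructor
    · rintro ⟨⟨m', ⟨⟨l, hl, rfl⟩, -⟩, rfl⟩, h3⟩
      exact ⟨⟨l, hl, by rw [Finset.inter_assoc]⟩, h3⟩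
    · rintro ⟨⟨l, hl, rfl⟩, h3⟩
      refine ⟨⟨l ∩ (M.chainS j).E, ⟨⟨l, hl, rfl⟩, ?_⟩, by rw [Finset.inter_assoc]⟩, h3⟩
      refine le_trans h3 (Finset.card_le_card ?_)
      intro x hx
      simp only [Finset.mem_inter] at hx ⊢
      exact ⟨hx.1, hx.2.1⟩

lemma key_bound (M : PLC α) (j : ℕ) {p : α} (hpE : p ∈ (M.chainS j).E)
    (hpS : p ∉ (M.chainS j).S) {P : Finset α} (hP : P ⊆ (M.chainS j).E) :
    ((M.restrict P).linesThrough p).card ≤ 1 := by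
  have hdeg : ((M.chainS j).linesThrough p).card ≤ 1 := by
    by_contra h
    push_neg at h
    exact hpS (Finset.mem_filter.mpr ⟨hpE, h⟩)
  have hsub : (M.restrict P).linesThrough p
      ⊆ ((M.chainS j).linesThrough p).image (· ∩ P) := by
    intro m hm
    rw [PLC.linesThrough, Finset.mem_filter] at hm
    obtain ⟨hm1, hpm⟩ := hm
    rw [PLC.restrict] at hm1
    simp only [Finset.mem_filter, Finset.mem_image] at hm1
    obtain ⟨⟨l, hl, rfl⟩, h3⟩ := hm1
    have hLP : (l ∩ (M.chainS j).E) ∩ P = l ∩ P := by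
      rw [Finset.inter_assoc, Finset.inter_eq_right.mpr hP]
    have hL3 : 3 ≤ (l ∩ (M.chainS j).E).card :=
      le_trans h3 (Finset.card_le_card
        (Finset.inter_subset_inter (Finset.Subset.refl l) hP))
    have hLmem : l ∩ (M.chainS j).E ∈ (M.chainS j).lines := by
      rw [chain_lines]
      exact Finset.mem_filter.mpr ⟨Finset.mem_image.mpr ⟨l, hl, rfl⟩, hL3⟩
    have hpL : p ∈ l ∩ (M.chainS j).E :=
      Finset.mem_inter.mpr ⟨(Finset.mem_inter.mp hpm).1, hpE⟩
    exact Finset.mem_image.mpr ⟨l ∩ (M.chainS j).E,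
      Finset.mem_filter.mpr ⟨hLmem, hpL⟩, hLP⟩
  calc ((M.restrict P).linesThrough p).card
      ≤ (((M.chainS j).linesThrough p).image (· ∩ P)).card := Finset.card_le_card hsub
    _ ≤ ((M.chainS j).linesThrough p).card := Finset.card_image_le
    _ ≤ 1 := hdeg

end PLCAux

/-- If `M` is a nilpotent point-line configuration with `d` points, then there is an
ordering `p₁, ..., p_d` of its points such that each `pᵢ` lies on at most one line of
the restriction `M | {p₁, ..., pᵢ}`. -/
theorem nilpotent_exists_good_ordering (M : PLC α) (hM : M.Nilpotent)
    (d : ℕ) (hd : M.E.card = d) :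
    ∃ p : Fin d → α, Function.Injective p ∧ (∀ i, p i ∈ M.E) ∧
      ∀ i : Fin d,
        (((M.restrict ((Finset.univ.filter (fun j => j ≤ i)).image p)).linesThrough
            (p i)).card ≤ 1) := by
  classical
  obtain ⟨j₀, hj₀⟩ := hM
  have hex : ∀ q : α, ∃ j, q ∉ (M.chainS j).E := fun q => ⟨j₀, by simp [hj₀]⟩
  set lvl : α → ℕ := fun q => Nat.find (hex q) with hlvl
  have hlvl_spec : ∀ q, q ∉ (M.chainS (lvl q)).E := fun q => Nat.find_spec (hex q)
  have hlvl_min : ∀ q k, k < lvl q → q ∈ (M.chainS k).E := by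
    intro q k hk
    by_contra h
    exact absurd (Nat.find_le h) (not_le.mpr hk)
  set r : α → α → Bool := fun a b => decide (lvl b ≤ lvl a) with hr
  set L : List α := M.E.toList.mergeSort r with hLdef
  have hperm : L.Perm M.E.toList := List.mergeSort_perm M.E.toList r
  have hsorted : List.Pairwise (fun a b => r a b = true) L :=
    List.pairwise_mergeSort (fun a b c hab hbc => by
        simp only [hr, decide_eq_true_eq] at *; omega)
      (fun a b => by simp only [hr, Bool.or_eq_true, decide_eq_true_eq]; omega)
      M.E.toList
  have hnodup : L.Nodup := hperm.nodup_iff.mpr M.E.nodup_toList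
  have hlen : L.length = d := by rw [hperm.length_eq, Finset.length_toList, hd]
  have hmemL : ∀ x ∈ L, x ∈ M.E := fun x hx =>
    Finset.mem_toList.mp (hperm.mem_iff.mp hx)
  refine ⟨fun i => L.get (Fin.cast hlen.symm i), ?_, ?_, ?_⟩
  · exact (List.nodup_iff_injective_get.mp hnodup).comp (Fin.cast_injective _)
  · intro i
    exact hmemL _ (List.get_mem L _)
  · intro i
    set q := L.get (Fin.cast hlen.symm i) with hq
    have hqE : q ∈ M.E := hmemL _ (List.get_mem L _)
    have hlq : 1 ≤ lvl q := by
      rcases Nat.eq_zero_or_pos (lvl q) with h0 | h; · exact absurd hqE (by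
        have := hlvl_spec q; rw [h0] at this; exact this)
      · exact h
    set j := lvl q - 1 with hj
    have hjsucc : j + 1 = lvl q := by omega
    have hqEj : q ∈ (M.chainS j).E := hlvl_min q j (by omega)
    have hqSj : q ∉ (M.chainS j).S := by
      intro hS
      exact hlvl_spec q (by
        rw [← hjsucc, PLCAux.chain_E_succ]
        exact Finset.mem_inter.mpr ⟨hqEj, hS⟩)
    have hP : ((Finset.univ.filter (fun j' => j' ≤ i)).image
        (fun i' : Fin d => L.get (Fin.cast hlen.symm i'))) ⊆ (M.chainS j).E := by
      intro x hx
      simp only [Finset.mem_image, Finset.mem_filter, Finset.mem_univ, true_and] at hx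
      obtain ⟨i', hi', rfl⟩ := hx
      set x := L.get (Fin.cast hlen.symm i') with hxdef
      have hxE : x ∈ M.E := hmemL _ (List.get_mem L _)
      have hlx : lvl q ≤ lvl x := by
        rcases lt_or_eq_of_le hi' with hlt | heq
        · have := List.pairwise_iff_get.mp hsorted (Fin.cast hlen.symm i')
            (Fin.cast hlen.symm i) (by simpa using hlt)
          simpa only [hr, decide_eq_true_eq] using this
        · rw [hxdef, heq, ← hq]
      have hxEj : x ∈ (M.chainS (lvl x - 1)).E := hlvl_min x _ (by omega)
      exact PLCAux.chain_E_antitone M (by omega) hxEj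
    exact PLCAux.key_bound M j hqEj hqSj hP
end
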